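/- Let r > 2/3 and let K(u;r) = 40u^3 − (50r + 169)u^2 + (160r + 224)u − 120r − 96. Then K(6/5;r) = −36/25, K(4/3;r) = (40/9)(r − 2/3), K(2;r) = −4, and K(·;r) has exactly one real root in each of the three intervals (6/5, 4/3), (4/3, 2) and (2, ∞). -/
import Mathlib


noncomputable section

/-- The cubic `K(u;r)` whose roots give the `u`-coordinates of the intersections of the
nullclines of the pipe-flow traveling-wave model. -/
def Kc (u r : ℝ) : ℝ := 40*u^3 - (50*r + 169)*u^2 + (160*r + 224)*u - 120*r - 96

lemma Kc_cont (r : ℝ) : Continuous (fun u => Kc u r) := by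
  unfold Kc; fun_prop

/-- A cubic cannot have four distinct roots. -/
lemma four_roots (r x1 x2 x3 x4 : ℝ)
    (h12 : x1 ≠ x2) (h13 : x1 ≠ x3) (h14 : x1 ≠ x4)
    (h23 : x2 ≠ x3) (h24 : x2 ≠ x4) (h34 : x3 ≠ x4)
    (k1 : Kc x1 r = 0) (k2 : Kc x2 r = 0) (k3 : Kc x3 r = 0) (k4 : Kc x4 r = 0) :
    False := by
  have hQ : ∀ x y : ℝ, Kc x r = 0 → Kc y r = 0 → x ≠ y →
      40*(x^2+x*y+y^2) - (50*r+169)*(x+y) + (160*r+224) = 0 := by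
    intro x y hx hy hxy
    have hmul : (x - y) * (40*(x^2+x*y+y^2) - (50*r+169)*(x+y) + (160*r+224))
        = Kc x r - Kc y r := by unfold Kc; ring
    have hxy' : x - y ≠ 0 := sub_ne_zero.mpr hxy
    have : (x - y) * (40*(x^2+x*y+y^2) - (50*r+169)*(x+y) + (160*r+224)) = 0 := by
      rw [hmul, hx, hy]; ring
    exact (mul_eq_zero.mp this).resolve_left hxy'
  have q13 := hQ x1 x3 k1 k3 h13
  have q23 := hQ x2 x3 k2 k3 h23
  have q14 := hQ x1 x4 k1 k4 h14
  have q24 := hQ x2 x4 k2 k4 h24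
  have h12' : x1 - x2 ≠ 0 := sub_ne_zero.mpr h12
  have e3 : (x1 - x2) * (40*(x1+x2+x3) - (50*r+169)) = 0 := by linear_combination q13 - q23
  have e4 : (x1 - x2) * (40*(x1+x2+x4) - (50*r+169)) = 0 := by linear_combination q14 - q24
  have s3 := (mul_eq_zero.mp e3).resolve_left h12'
  have s4 := (mul_eq_zero.mp e4).resolve_left h12'
  exact h34 (by linarith)

theorem stmt0 (r : ℝ) (hr : 2/3 < r) :
    Kc (6/5) r = -36/25 ∧
    Kc (4/3) r = (40/9) * (r - 2/3) ∧
    Kc 2 r = -4 ∧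
    (∃! u : ℝ, u ∈ Set.Ioo (6/5 : ℝ) (4/3) ∧ Kc u r = 0) ∧
    (∃! u : ℝ, u ∈ Set.Ioo (4/3 : ℝ) 2 ∧ Kc u r = 0) ∧
    (∃! u : ℝ, u ∈ Set.Ioi (2 : ℝ) ∧ Kc u r = 0) := by
  have v1 : Kc (6/5) r = -36/25 := by unfold Kc; ring
  have v2 : Kc (4/3) r = (40/9) * (r - 2/3) := by unfold Kc; ring
  have v3 : Kc 2 r = -4 := by unfold Kc; ring
  have v2pos : 0 < Kc (4/3) r := by rw [v2]; nlinarith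
  set u0 : ℝ := 2*r + 10 with hu0
  have hu0gt : (2:ℝ) < u0 := by simp [hu0]; linarith
  have v4 : 0 < Kc u0 r := by
    unfold Kc; simp only [hu0]; nlinarith [sq_nonneg r, sq_nonneg (r-1), pow_pos (by linarith : (0:ℝ) < 2*r+10) 3]
  have cont := Kc_cont r
  -- existence in the three intervals
  have ha : ∃ a ∈ Set.Ioo (6/5 : ℝ) (4/3), Kc a r = 0 := by
    have h := intermediate_value_Ioo (by norm_num : (6/5 : ℝ) ≤ 4/3) cont.continuousOn
    have : (0:ℝ) ∈ Set.Ioo (Kc (6/5) r) (Kc (4/3) r) := ⟨by rw [v1]; norm_num, v2pos⟩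
    obtain ⟨a, ha, hka⟩ := h this
    exact ⟨a, ha, hka⟩
  have hb : ∃ b ∈ Set.Ioo (4/3 : ℝ) 2, Kc b r = 0 := by
    have h := intermediate_value_Ioo' (by norm_num : (4/3 : ℝ) ≤ 2) cont.continuousOn
    have : (0:ℝ) ∈ Set.Ioo (Kc 2 r) (Kc (4/3) r) := ⟨by rw [v3]; norm_num, v2pos⟩
    obtain ⟨b, hb, hkb⟩ := h this
    exact ⟨b, hb, hkb⟩
  have hc : ∃ c ∈ Set.Ioo (2 : ℝ) u0, Kc c r = 0 := by
    have h := intermediate_value_Ioo (le_of_lt hu0gt) cont.continuousOn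
    have : (0:ℝ) ∈ Set.Ioo (Kc 2 r) (Kc u0 r) := ⟨by rw [v3]; norm_num, v4⟩
    obtain ⟨c, hc, hkc⟩ := h this
    exact ⟨c, hc, hkc⟩
  obtain ⟨a, ⟨ha1, ha2⟩, hka⟩ := ha
  obtain ⟨b, ⟨hb1, hb2⟩, hkb⟩ := hb
  obtain ⟨c, ⟨hc1, hc2⟩, hkc⟩ := hc
  refine ⟨v1, v2, v3, ?_, ?_, ?_⟩
  · refine ⟨a, ⟨⟨ha1, ha2⟩, hka⟩, ?_⟩
    rintro v ⟨⟨hv1, hv2⟩, hkv⟩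
    by_contra hne
    exact four_roots r v a b c hne (by linarith) (by linarith)
      (by linarith) (by linarith) (by linarith) hkv hka hkb hkc
  · refine ⟨b, ⟨⟨hb1, hb2⟩, hkb⟩, ?_⟩
    rintro v ⟨⟨hv1, hv2⟩, hkv⟩
    by_contra hne
    exact four_roots r v b a c hne (by linarith) (by linarith)
      (by linarith) (by linarith) (by linarith) hkv hkb hka hkc
  · refine ⟨c, ⟨hc1, hkc⟩, ?_⟩
    rintro v ⟨hv1, hkv⟩
    rw [Set.mem_Ioi] at hv1
    by_contra hne
    exact four_roots r v c a b hne (by linarith) (by linarith)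
      (by linarith) (by linarith) (by linarith) hkv hkc hka hkb
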